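/- arXiv:2202.10950 — 3 statements merged into one kernel-verified Lean document; each statement's English description precedes it below -/
import Mathlib

section
/- In the blockchain challenge-stage mechanism with one legitimate claimant A (with spite parameter θ > 0) and one illegitimate claimant B, if A is selected in the challenge stage then A's unique optimal action is to assert the claim (yielding payoff 0 before fees, versus -θ from withdrawing); consequently B's expected payoff from making a claim is -f < 0, and the unique subgame perfect equilibrium has A as the sole claimant, earning T - f. -/
/-- Expected payoff to the legitimate claimant `A` in the front-running game.
`T` : contract payment, `f` : transaction fee, `θ` : A's spite parameter, `q` :
probability that A is the claimant selected in the challenge stage.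
`cA` : whether A claims; `cB` : B's claiming decision as a function of A's observed
action; `rA`, `rB` : the precontingent challenge actions (`true` = assert, `false` =
withdraw).  If only one claim is made its sender is paid `T`; with two claims the
selected claimant asserts (burning `T`) or withdraws (paying the other claimant). -/
noncomputable def frUA (T f θ q : ℝ) (cA : Bool) (cB : Bool → Bool) (rA rB : Bool) : ℝ :=
  if cA then
    if cB true then
      q * (if rA then -f else -θ - f) + (1 - q) * (if rB then -f else T - f)
    else T - f
  else if cB false then -θ else 0

/-- B's continuation payoff after observing A's claiming action `c`, from choosing to
claim (`d = true`) or not, given the challenge actions `rA`. -/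
noncomputable def frContB (T f q : ℝ) (rA : Bool) (c d : Bool) : ℝ :=
  if c then
    if d then q * (if rA then -f else T - f) + (1 - q) * (-f) else 0
  else if d then T - f else 0

/-- with one legitimate claimant `A` (spite `θ > 0`) and one illegitimate
claimant `B`, fees `0 < f < T`, in any subgame perfect equilibrium: A's challenge action
is the unique optimum assert (payoff `0` vs `-θ` from withdrawing); B's payoff from
claiming against A's claim is `-f < 0`; hence A is the sole claimant and earns `T - f`. -/
theorem frontrunning_unique_SPE (T f θ q : ℝ)
    (hf : 0 < f) (hfT : f < T) (hθ : 0 < θ) (hq0 : 0 ≤ q) (hq1 : q ≤ 1)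
    (cA : Bool) (cB : Bool → Bool) (rA rB : Bool)
    -- challenge-stage optimality for the selected legitimate claimant A
    (hrA : ∀ r : Bool, (if r then (0 : ℝ) else -θ) ≤ (if rA then (0 : ℝ) else -θ))
    -- challenge-stage optimality for the selected illegitimate claimant B (indifferent)
    (hrB : ∀ r : Bool, (if r then (0 : ℝ) else 0) ≤ (if rB then (0 : ℝ) else 0))
    -- B's claiming decision is optimal after each observed action of A
    (hcB : ∀ c d : Bool, frContB T f q rA c d ≤ frContB T f q rA c (cB c))
    -- A's claiming decision is optimal
    (hcA : ∀ c : Bool, frUA T f θ q c cB rA rB ≤ frUA T f θ q cA cB rA rB) :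
    rA = true ∧
      frContB T f q rA true true = -f ∧ (-f : ℝ) < 0 ∧
      cB true = false ∧ cA = true ∧
      frUA T f θ q cA cB rA rB = T - f := by
  have hrAt : rA = true := by
    cases hra : rA
    · exfalso; have := hrA true; rw [hra] at this; simp at this; linarith
    · rfl
  subst hrAt
  have hB : frContB T f q true true true = -f := by
    simp [frContB]; ring
  have hcBf : cB true = false := by
    cases hb : cB true
    · rfl
    · exfalso
      have := hcB true false
      rw [hb, hB] at this
      simp [frContB] at this
      linarith
  have hUAtrue : frUA T f θ q true cB true rB = T - f := by
    simp [frUA, hcBf]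
  have hcAt : cA = true := by
    cases hca : cA
    · exfalso
      have := hcA true
      rw [hca, hUAtrue] at this
      simp [frUA] at this
      cases hb : cB false <;> rw [hb] at this <;> simp at this <;> linarith
    · rfl
  subst hcAt
  exact ⟨rfl, hB, by linarith, hcBf, rfl, hUAtrue⟩
end

section
/- In the iterated coalition-elimination procedure for m ≥ 2 claimants (where in each round a subset of roughly half the remaining claimants is selected, and if all selected withdraw they are removed and the procedure repeats on the remainder), if the legitimate claimant always asserts when selected, then the procedure terminates in at most ⌈log₂ m⌉ + 1 rounds with some selected agent asserting, and the tokens are never paid to an illegitimate claimant. -/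
open Finset

/-- the iterated coalition-elimination procedure.  A pool of `m ≥ 2`
claimants contains exactly one legitimate claimant, who asserts whenever selected
(`asserts legit = true`).  In each round with current pool of size `k > 1`, a subset of
size `⌈k/2⌉` of the pool is selected; if any selected agent asserts the tokens are burned
and the process ends; if all selected agents withdraw they are removed and the process
repeats; a pool of size 1 means its sole member is paid.  `pools t` is the pool at round
`t` and `sel t` the selected subset; the round-`t` continuation condition is
`1 < (pools t).card ∧ ∀ i ∈ sel t, asserts i = false`.  Then: (i)–(ii) the process halts
within `⌈log₂ m⌉ + 1` rounds; (iii) as long as the process runs, the legitimate claimant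
remains in the pool, so if the pool ever reaches size 1 its sole member is the
legitimate claimant — the tokens are never paid to an illegitimate claimant. -/
theorem coalition_elimination_terminates (m : ℕ) (hm : 2 ≤ m) (legit : Fin m)
    (pools sel : ℕ → Finset (Fin m)) (asserts : Fin m → Bool)
    (h0 : pools 0 = Finset.univ)
    (hassert : asserts legit = true)
    (hsel : ∀ t, 1 < (pools t).card →
      sel t ⊆ pools t ∧ (sel t).card = ((pools t).card + 1) / 2)
    (hstep : ∀ t, (1 < (pools t).card ∧ ∀ i ∈ sel t, asserts i = false) →
      pools (t + 1) = pools t \ sel t) :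
    (∃ t ≤ Nat.clog 2 m + 1,
        ¬(1 < (pools t).card ∧ ∀ i ∈ sel t, asserts i = false)) ∧
      (∀ t, (∀ s < t, 1 < (pools s).card ∧ ∀ i ∈ sel s, asserts i = false) →
        legit ∈ pools t ∧ ((pools t).card = 1 → pools t = {legit})) := by
  have key : ∀ t, (∀ s < t, 1 < (pools s).card ∧ ∀ i ∈ sel s, asserts i = false) →
      (pools t).card = m / 2 ^ t ∧ legit ∈ pools t := by
    intro t
    induction t with
    | zero => intro _; simp [h0]
    | succ t ih =>
      intro h
      have hcond := h t (Nat.lt_succ_self t)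
      obtain ⟨hcard, hmem⟩ := ih (fun s hs => h s (hs.trans (Nat.lt_succ_self t)))
      obtain ⟨hsub, hselcard⟩ := hsel t hcond.1
      have hp := hstep t hcond
      have hln : legit ∉ sel t := by
        intro hin
        have := hcond.2 legit hin
        rw [hassert] at this; simp at this
      constructor
      · rw [hp, Finset.card_sdiff_of_subset hsub, hselcard, hcard]
        have h2 : m / 2 ^ (t + 1) = m / 2 ^ t / 2 := by
          rw [pow_succ, Nat.div_div_eq_div_mul]
        rw [h2]; omega
      · rw [hp, Finset.mem_sdiff]; exact ⟨hmem, hln⟩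
  constructor
  · by_contra hc
    push_neg at hc
    have hcond := hc (Nat.clog 2 m) (by omega)
    have hcard := (key (Nat.clog 2 m) (fun s hs => hc s (by omega))).1
    have hle : m ≤ 2 ^ Nat.clog 2 m := Nat.le_pow_clog (by norm_num) m
    have hpos : 0 < 2 ^ Nat.clog 2 m := Nat.pow_pos (by norm_num)
    have : m / 2 ^ Nat.clog 2 m ≤ 1 := by
      calc m / 2 ^ Nat.clog 2 m ≤ 2 ^ Nat.clog 2 m / 2 ^ Nat.clog 2 m :=
            Nat.div_le_div_right hle
        _ = 1 := Nat.div_self hpos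
    omega
  · intro t h
    obtain ⟨hcard, hmem⟩ := key t h
    refine ⟨hmem, fun h1 => ?_⟩
    obtain ⟨a, ha⟩ := Finset.card_eq_one.mp h1
    rw [ha] at hmem ⊢
    simp only [Finset.mem_singleton] at hmem
    rw [hmem]
end

section
/- In the blockchain challenge mechanism, if the legitimate claimant precommits (at claim-submission time) a contingent challenge-stage response, then asserting is a weakly dominant precommitment even when θ = 0, and it is strictly dominant when θ > 0 or when withdrawing requires an additional fee ε > 0; under either strict condition, no illegitimate claimant participates in equilibrium. -/
/-- Expected payoff of the legitimate claimant who, at claim-submission time, precommits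
the contingent challenge-stage plan `r` (`true` = assert, costless because precommitted;
`false` = withdraw, which requires an additional message fee `ε`), when the illegitimate
claimant claims with probability `s`, selection in a dispute is uniform (probability
`1/2` each), and the illegitimate claimant's own challenge action when selected is
`bAct` (`true` = assert, burning `T`; `false` = withdraw, paying the legitimate
claimant).  Gross payoffs of the legitimate claimant: `T` if paid, `-θ` if the
illegitimate claimant is paid, `0` if the tokens are burned; every claim costs `f`. -/
noncomputable def precommitUA (T f θ ε : ℝ) (r : Bool) (s : ℝ) (bAct : Bool) : ℝ :=
  (1 - s) * (T - f) +
    s * ((1 / 2) * (if r then -f else -θ - f - ε) +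
         (1 / 2) * (if bAct then -f else T - f))

/-- with precommitted challenge responses, (i) 'assert' is a weakly dominant
precommitment for the legitimate claimant even when `θ = 0`; (ii) it is strictly better
than 'withdraw' against any claiming strategy used with positive probability whenever
`θ > 0` or the withdrawal message fee `ε > 0`; (iii) given the 'assert' precommitment,
the illegitimate claimant's payoff from claiming is `-f < 0` versus `0` from abstaining,
so under either strict condition the illegitimate claimant's unique best response is not
to participate. -/
theorem precommitted_assert_dominates (T f θ ε : ℝ)
    (hf : 0 < f) (hfT : f < T) (hθ : 0 ≤ θ) (hε : 0 ≤ ε) :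
    (∀ s : ℝ, 0 ≤ s → s ≤ 1 → ∀ bAct : Bool,
      precommitUA T f θ ε false s bAct ≤ precommitUA T f θ ε true s bAct) ∧
    ((0 < θ ∨ 0 < ε) → ∀ s : ℝ, 0 < s → s ≤ 1 → ∀ bAct : Bool,
      precommitUA T f θ ε false s bAct < precommitUA T f θ ε true s bAct) ∧
    -- the illegitimate claimant, facing the 'assert' precommitment, gets `-f` from
    -- claiming (selected or not, the tokens are never paid to them) and `0` otherwise,
    -- so any optimal claiming decision is to abstain
    ((1 / 2) * (-f) + (1 / 2) * (-f) = -f ∧ (-f : ℝ) < 0 ∧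
      ((0 < θ ∨ 0 < ε) → ∀ claimB : Bool,
        (∀ d : Bool, (if d then -f else (0 : ℝ)) ≤ (if claimB then -f else 0)) →
          claimB = false)) := by
  refine ⟨?_, ?_, by ring, by linarith, ?_⟩
  · intro s hs0 hs1 bAct
    cases bAct <;> simp only [precommitUA] <;> norm_num <;>
      nlinarith [mul_nonneg hs0 hθ, mul_nonneg hs0 hε]
  · intro hstrict s hs0 hs1 bAct
    rcases hstrict with h | h <;> cases bAct <;> simp only [precommitUA] <;> norm_num <;>
      nlinarith [mul_pos hs0 h, mul_nonneg hs0.le hε, mul_nonneg hs0.le hθ]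
  · intro _ claimB h
    cases claimB with
    | false => rfl
    | true => have := h false; simp at this; linarith
end
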